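/- Equivalence of the 1-D Euler system with gravitational source and its purely conservative global-flux reformulation: let ρ, v, p : [a,b] × [0,T] → ℝ be C¹ with ρ > 0, let φ : [a,b] → ℝ be C¹ and time-independent, set E = p/(γ−1) + ρv²/2, R(y,t) = ∫_a^y ρ(ξ,t) φ'(ξ) dξ, and L = p + R. Assume the mass equation ρ_t + (ρv)_y = 0 holds on [a,b] × [0,T]. Then at every point: (i) the momentum balance (ρv)_t + (ρv² + p)_y = −ρφ' holds if and only if the conservative momentum equation (ρv)_t + (ρv² + L)_y = 0 holds; and (ii) the energy balance E_t + (v(E + p))_y = −ρvφ' holds if and only if the conservative energy equation (E + ρφ)_t + (v(E + ρφ + p))_y = 0 holds. -/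

import Mathlib

/- STATEMENT 11: Equivalence of the 1-D Euler system with gravitational source and its purely
conservative global-flux reformulation.  Let `ρ, v, p` be C¹ with `ρ > 0` on
`[a,b] × [0,T]`, let `φ` be C¹ and time-independent, set `E = p/(γ−1) + ρv²/2`,
`R(y,t) = ∫_a^y ρ(ξ,t) φ'(ξ) dξ`, and `L = p + R`.  Assume the mass equation
`ρ_t + (ρv)_y = 0` on `[a,b] × [0,T]`.  Then at every point:
(i) `(ρv)_t + (ρv² + p)_y = −ρφ'` iff `(ρv)_t + (ρv² + L)_y = 0`;
(ii) `E_t + (v(E+p))_y = −ρvφ'` iff `(E + ρφ)_t + (v(E + ρφ + p))_y = 0`. -/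
theorem global_flux_reformulation_1D
    (γ T a b : ℝ) (hγ : 1 < γ) (hT : 0 < T) (hab : a < b)
    (ρ v p : ℝ → ℝ → ℝ) (φ : ℝ → ℝ)
    (hρ : ContDiff ℝ 1 (fun z : ℝ × ℝ => ρ z.1 z.2))
    (hv : ContDiff ℝ 1 (fun z : ℝ × ℝ => v z.1 z.2))
    (hp : ContDiff ℝ 1 (fun z : ℝ × ℝ => p z.1 z.2))
    (hφ : ContDiff ℝ 1 φ)
    (hρpos : ∀ y ∈ Set.Icc a b, ∀ t ∈ Set.Icc 0 T, 0 < ρ y t)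
    (E R L : ℝ → ℝ → ℝ)
    (hE : ∀ y t, E y t = p y t / (γ - 1) + ρ y t * (v y t) ^ 2 / 2)
    (hR : ∀ y t, R y t = ∫ ξ in a..y, ρ ξ t * deriv φ ξ)
    (hL : ∀ y t, L y t = p y t + R y t)
    (hmass : ∀ y ∈ Set.Icc a b, ∀ t ∈ Set.Icc 0 T,
      deriv (fun τ => ρ y τ) t + deriv (fun ξ => ρ ξ t * v ξ t) y = 0) :
    ∀ y ∈ Set.Icc a b, ∀ t ∈ Set.Icc 0 T,
      ((deriv (fun τ => ρ y τ * v y τ) t +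
          deriv (fun ξ => ρ ξ t * (v ξ t) ^ 2 + p ξ t) y = -(ρ y t * deriv φ y))
        ↔ (deriv (fun τ => ρ y τ * v y τ) t +
          deriv (fun ξ => ρ ξ t * (v ξ t) ^ 2 + L ξ t) y = 0)) ∧
      ((deriv (fun τ => E y τ) t +
          deriv (fun ξ => v ξ t * (E ξ t + p ξ t)) y = -(ρ y t * v y t * deriv φ y))
        ↔ (deriv (fun τ => E y τ + ρ y τ * φ y) t +
          deriv (fun ξ => v ξ t * (E ξ t + ρ ξ t * φ ξ + p ξ t)) y = 0)) := by
  intro y hy t ht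
  have hρd := hρ.differentiable one_ne_zero
  have hvd := hv.differentiable one_ne_zero
  have hpd := hp.differentiable one_ne_zero
  have hφd := hφ.differentiable one_ne_zero
  -- spatial sections
  have dρy : Differentiable ℝ (fun ξ => ρ ξ t) :=
    hρd.comp (differentiable_id.prodMk (differentiable_const t))
  have dvy : Differentiable ℝ (fun ξ => v ξ t) :=
    hvd.comp (differentiable_id.prodMk (differentiable_const t))
  have dpy : Differentiable ℝ (fun ξ => p ξ t) :=
    hpd.comp (differentiable_id.prodMk (differentiable_const t))
  -- temporal sections
  have dρt : Differentiable ℝ (fun τ => ρ y τ) :=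
    hρd.comp ((differentiable_const y).prodMk differentiable_id)
  -- E sections
  have hEy : (fun ξ => E ξ t) = fun ξ => p ξ t / (γ - 1) + ρ ξ t * (v ξ t) ^ 2 / 2 :=
    funext fun ξ => hE ξ t
  have dEy : Differentiable ℝ (fun ξ => E ξ t) := by
    rw [hEy]
    exact (dpy.div_const _).add ((dρy.mul (dvy.pow 2)).div_const _)
  -- derivative of R in space: FTC
  have hgc : Continuous (fun ξ => ρ ξ t * deriv φ ξ) :=
    ((hρ.continuous).comp (continuous_id.prodMk continuous_const)).mul
      (hφ.continuous_deriv le_rfl)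
  have hRder : HasDerivAt (fun u => ∫ ξ in a..u, ρ ξ t * deriv φ ξ)
      (ρ y t * deriv φ y) y := by
    exact intervalIntegral.integral_hasDerivAt_right
      (hgc.intervalIntegrable a y)
      (hgc.stronglyMeasurableAtFilter _ _)
      hgc.continuousAt
  have hRy : (fun ξ => R ξ t) = fun u => ∫ ξ in a..u, ρ ξ t * deriv φ ξ :=
    funext fun u => hR u t
  have dR : HasDerivAt (fun ξ => R ξ t) (ρ y t * deriv φ y) y := by
    rw [hRy]; exact hRder
  -- part (i): derivative of the L-flux
  have key1 : deriv (fun ξ => ρ ξ t * (v ξ t) ^ 2 + L ξ t) y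
      = deriv (fun ξ => ρ ξ t * (v ξ t) ^ 2 + p ξ t) y + ρ y t * deriv φ y := by
    have h1 : (fun ξ => ρ ξ t * (v ξ t) ^ 2 + L ξ t)
        = fun ξ => (ρ ξ t * (v ξ t) ^ 2 + p ξ t) + R ξ t := by
      funext ξ; rw [hL]; ring
    rw [h1, deriv_fun_add (show DifferentiableAt ℝ (fun ξ => ρ ξ t * (v ξ t) ^ 2 + p ξ t) y from
      ((dρy.mul (dvy.pow 2)).add dpy).differentiableAt)
      dR.differentiableAt, dR.deriv]
  -- part (ii): derivative of time term
  have key2a : deriv (fun τ => E y τ + ρ y τ * φ y) t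
      = deriv (fun τ => E y τ) t + deriv (fun τ => ρ y τ) t * φ y := by
    have dEt : Differentiable ℝ (fun τ => E y τ) := by
      have : (fun τ => E y τ) = fun τ => p y τ / (γ - 1) + ρ y τ * (v y τ) ^ 2 / 2 :=
        funext fun τ => hE y τ
      rw [this]
      exact ((hpd.comp ((differentiable_const y).prodMk differentiable_id)).div_const _).add
        (((hρd.comp ((differentiable_const y).prodMk differentiable_id)).mul
          ((hvd.comp ((differentiable_const y).prodMk differentiable_id)).pow 2)).div_const _)
    rw [deriv_fun_add dEt.differentiableAt (show DifferentiableAt ℝ (fun τ => ρ y τ * φ y) t from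
      (dρt.mul_const _).differentiableAt),
      deriv_mul_const dρt.differentiableAt]
  -- part (ii): derivative of space term
  have key2b : deriv (fun ξ => v ξ t * (E ξ t + ρ ξ t * φ ξ + p ξ t)) y
      = deriv (fun ξ => v ξ t * (E ξ t + p ξ t)) y +
        (deriv (fun ξ => ρ ξ t * v ξ t) y * φ y + ρ y t * v y t * deriv φ y) := by
    have h1 : (fun ξ => v ξ t * (E ξ t + ρ ξ t * φ ξ + p ξ t))
        = fun ξ => v ξ t * (E ξ t + p ξ t) + (ρ ξ t * v ξ t) * φ ξ := by
      funext ξ; ring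
    have d1 : Differentiable ℝ (fun ξ => v ξ t * (E ξ t + p ξ t)) :=
      dvy.mul (dEy.add dpy)
    have d2 : Differentiable ℝ (fun ξ => ρ ξ t * v ξ t) := dρy.mul dvy
    rw [h1, deriv_fun_add d1.differentiableAt (show DifferentiableAt ℝ (fun ξ => ρ ξ t * v ξ t * φ ξ) y from
      (d2.mul hφd).differentiableAt),
      deriv_fun_mul d2.differentiableAt (hφd.differentiableAt)]
  have hm := hmass y hy t ht
  constructor
  · rw [key1]
    constructor <;> intro h <;> linarith
  · rw [key2a, key2b]
    have hmφ : deriv (fun τ => ρ y τ) t * φ y + deriv (fun ξ => ρ ξ t * v ξ t) y * φ y = 0 := by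
      rw [← add_mul, hm, zero_mul]
    constructor <;> intro h <;> linarith
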